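/- Let k be a field of characteristic different from 2. Set x₀ = [[0,-1],[0,0]] and y₀ = [[-1,0],[0,1]] in the 2×2 matrices M₂(k), and for y ∈ M₂(k) let yᶥ denote its adjugate, so that the bilinear form on M₂(k) is (x, y) = tr(x yᶥ). Then for all x, y ∈ M₂(k) with det x = 0, x ≠ 0, tr(x yᶥ) = 0 and det y = -1, there exist g₁, g₂ ∈ GL₂(k) with det g₁ = det g₂ such that g₁ x g₂⁻¹ = x₀ and g₁ y g₂⁻¹ = y₀. -/

import Mathlib

open Matrix

lemma key_conj {k : Type*} [Field k] (u : Matrix (Fin 2) (Fin 2) k)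
    (htr : u.trace = 0) (hdet : u.det = 0) (hne : u ≠ 0) :
    ∃ P Q : Matrix (Fin 2) (Fin 2) k, P * Q = 1 ∧ Q * P = 1 ∧
      u * P = P * !![0, -1; 0, 0] := by
  obtain ⟨a, b, c, d, rfl⟩ : ∃ a b c d, u = !![a, b; c, d] :=
    ⟨_, _, _, _, Matrix.eta_fin_two u⟩
  rw [Matrix.trace_fin_two] at htr
  rw [Matrix.det_fin_two] at hdet
  simp only [Matrix.of_apply, Matrix.cons_val_zero, Matrix.cons_val_one, Matrix.head_cons,
    Matrix.cons_val', Matrix.empty_val', Matrix.cons_val_fin_one, Matrix.head_fin_const]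
    at htr hdet
  by_cases hcz : c = 0
  · subst hcz
    have haz : a = 0 := by
      have h2 : a * a = 0 := by linear_combination a * htr - hdet
      exact mul_self_eq_zero.mp h2
    have hdz : d = 0 := by linear_combination htr - haz
    subst haz hdz
    have hbz : b ≠ 0 := by
      rintro rfl
      exact hne (by ext i j; fin_cases i <;> fin_cases j <;> simp)
    refine ⟨!![-b, 0; 0, 1], !![-b⁻¹, 0; 0, 1], ?_, ?_, ?_⟩ <;>
      · ext i j; fin_cases i <;> fin_cases j <;>
          simp [Matrix.mul_apply, Fin.sum_univ_two] <;> field_simp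
  · refine ⟨!![-a, 1; -c, 0], !![0, -c⁻¹; 1, -(a * c⁻¹)], ?_, ?_, ?_⟩
    · ext i j; fin_cases i <;> fin_cases j <;>
        simp [Matrix.mul_apply, Fin.sum_univ_two] <;> field_simp
    · ext i j; fin_cases i <;> fin_cases j <;>
        simp [Matrix.mul_apply, Fin.sum_univ_two] <;> field_simp <;> ring
    · ext i j; fin_cases i <;> fin_cases j <;>
        simp [Matrix.mul_apply, Fin.sum_univ_two]
      · linear_combination hdet - a * htr
      · linear_combination (-c) * htr

theorem transitive_action_on_X₁ {k : Type*} [Field k] (hchar : ringChar k ≠ 2)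
    (x y : Matrix (Fin 2) (Fin 2) k) (hxdet : x.det = 0) (hx0 : x ≠ 0)
    (hxy : (x * y.adjugate).trace = 0) (hydet : y.det = -1) :
    ∃ g₁ g₂ : (Matrix (Fin 2) (Fin 2) k)ˣ,
      (g₁.val).det = (g₂.val).det ∧
      g₁.val * x * (g₂⁻¹).val = !![0, -1; 0, 0] ∧
      g₁.val * y * (g₂⁻¹).val = !![-1, 0; 0, 1] := by
  set y₀ : Matrix (Fin 2) (Fin 2) k := !![-1, 0; 0, 1] with hy₀def
  set x₀ : Matrix (Fin 2) (Fin 2) k := !![0, -1; 0, 0] with hx₀def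
  -- y is a unit with inverse -adj y
  have hyinv1 : y * (-y.adjugate) = 1 := by
    rw [mul_neg, Matrix.mul_adjugate, hydet, neg_smul, neg_neg, one_smul]
  have hyinv2 : (-y.adjugate) * y = 1 := by
    rw [neg_mul, Matrix.adjugate_mul, hydet, neg_smul, neg_neg, one_smul]
  have hy₀inv : y₀ * y₀ = 1 := by
    ext i j; fin_cases i <;> fin_cases j <;>
      simp [hy₀def, Matrix.mul_apply, Fin.sum_univ_two]
  -- the matrix u = x * y⁻¹
  set u : Matrix (Fin 2) (Fin 2) k := x * (-y.adjugate) with hudef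
  have hutr : u.trace = 0 := by
    rw [hudef, mul_neg, Matrix.trace_neg, hxy, neg_zero]
  have hudet : u.det = 0 := by
    rw [hudef, Matrix.det_mul, hxdet, zero_mul]
  have hune : u ≠ 0 := by
    intro h
    apply hx0
    have : u * y = x := by rw [hudef, mul_assoc, hyinv2, mul_one]
    rw [← this, h, zero_mul]
  obtain ⟨P, Q, hPQ, hQP, hkey⟩ := key_conj u hutr hudet hune
  refine ⟨⟨Q, P, hQP, hPQ⟩, ⟨y₀, y₀, hy₀inv, hy₀inv⟩ * ⟨Q, P, hQP, hPQ⟩ * ⟨y, -y.adjugate, hyinv1, hyinv2⟩,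
    ?_, ?_, ?_⟩
  · show Q.det = (y₀ * Q * y).det
    have hdy₀ : y₀.det = -1 := by simp [hy₀def, Matrix.det_fin_two]
    rw [Matrix.det_mul, Matrix.det_mul, hdy₀, hydet]
    ring
  · show Q * x * ((-y.adjugate) * (P * y₀)) = x₀
    have h1 : Q * x * ((-y.adjugate) * (P * y₀)) = Q * (u * P) * y₀ := by
      rw [hudef]; simp only [mul_assoc]
    rw [h1, hkey, ← hx₀def, ← mul_assoc, hQP, one_mul]
    ext i j; fin_cases i <;> fin_cases j <;>
      simp [hx₀def, hy₀def, Matrix.mul_apply, Fin.sum_univ_two]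
  · show Q * y * ((-y.adjugate) * (P * y₀)) = y₀
    have h1 : Q * y * ((-y.adjugate) * (P * y₀)) = Q * (y * (-y.adjugate)) * (P * y₀) := by
      simp only [mul_assoc]
    rw [h1, hyinv1, mul_one, ← mul_assoc, hQP, one_mul]
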